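/- Assume the Continuum Hypothesis. Let X be a locally compact, locally countable Hausdorff topological space such that every closed subspace of X of cardinality at most ℵ₁ has the Moving Off Property. Then X has the Moving Off Property. -/

import Mathlib

open Set Topology

/-- A family of sets indexed by `ι` is *discrete* if every point has a neighborhood
meeting at most one member of the family. -/
def IsDiscreteFamily {ι X : Type*} [TopologicalSpace X] (U : ι → Set X) : Prop :=
  ∀ x : X, ∃ V ∈ nhds x, {i : ι | (U i ∩ V).Nonempty}.Subsingleton

/-- A *moving off collection* for `X`: a family of nonempty compact sets such that every
compact set is disjoint from some member of the family. -/
def IsMovingOff {X : Type*} [TopologicalSpace X] (𝒦 : Set (Set X)) : Prop :=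
  (∀ K ∈ 𝒦, K.Nonempty) ∧ (∀ K ∈ 𝒦, IsCompact K) ∧
    ∀ L : Set X, IsCompact L → ∃ K ∈ 𝒦, Disjoint K L

/-- The *Moving Off Property*: every moving off collection contains an infinite subfamily
of pairwise distinct sets admitting a discrete open expansion. -/
def HasMOP (X : Type*) [TopologicalSpace X] : Prop :=
  ∀ 𝒦 : Set (Set X), IsMovingOff 𝒦 →
    ∃ K : ℕ → Set X, (∀ n, K n ∈ 𝒦) ∧ Function.Injective K ∧
      ∃ U : ℕ → Set X, (∀ n, IsOpen (U n)) ∧ (∀ n, K n ⊆ U n) ∧ IsDiscreteFamily U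

/-- A space is *locally countable* if every point has a countable neighborhood. -/
def LocallyCountable (X : Type*) [TopologicalSpace X] : Prop :=
  ∀ x : X, ∃ N ∈ nhds x, N.Countable

/-- Transfinite iteration of a set operator, indexed by ordinals. -/
noncomputable def ordIter {X : Type*} (Φ : Set X → Set X) : Ordinal.{0} → Set X :=
  fun o => Φ (⋃ o' < o, ordIter Φ o')
termination_by o => o
decreasing_by exact ‹_›

theorem ordIter_def {X : Type*} (Φ : Set X → Set X) (o : Ordinal.{0}) :
    ordIter Φ o = Φ (⋃ o' < o, ordIter Φ o') := by
  rw [ordIter]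

/-- CH transfers between universes. -/
theorem CH_transfer (h : Cardinal.continuum.{v} = Cardinal.aleph.{v} 1) :
    Cardinal.continuum.{u} = Cardinal.aleph.{u} 1 := by
  have h3 := congrArg Cardinal.lift.{u} h
  rw [Cardinal.lift_continuum, Cardinal.lift_aleph, Ordinal.lift_one] at h3
  rw [← Cardinal.lift_inj.{u, v}, Cardinal.lift_continuum, Cardinal.lift_aleph,
    Ordinal.lift_one]
  exact h3

/-- Corollary 15: under CH, if `X` is locally compact, locally countable, Hausdorff, and every
closed subspace of cardinality at most `ℵ₁` has the MOP, then `X` has the MOP. -/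
theorem mop_of_small_closed_subspaces_CH (CH : Cardinal.continuum = Cardinal.aleph 1)
    (X : Type*) [TopologicalSpace X] [T2Space X] [LocallyCompactSpace X]
    (hlc : LocallyCountable X)
    (h : ∀ Y : Set X, IsClosed Y → Cardinal.mk Y ≤ Cardinal.aleph 1 → HasMOP Y) :
    HasMOP X := by
  classical
  intro 𝒦 hmo
  obtain ⟨hne, hcpt, hmov⟩ := hmo
  -- a choice of countable open neighborhoods with countable closure
  have hV : ∀ x : X, ∃ W : Set X, IsOpen W ∧ x ∈ W ∧ (closure W).Countable := by
    intro x
    obtain ⟨N, hN, hNc⟩ := hlc x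
    obtain ⟨K, hK, hKN, hKcomp⟩ := local_compact_nhds hN
    refine ⟨interior K, isOpen_interior, mem_interior_iff_mem_nhds.2 hK, ?_⟩
    exact hNc.mono ((closure_minimal interior_subset hKcomp.isClosed).trans hKN)
  choose V hVo hVx hVc using hV
  -- every compact set is countable
  have hcptct : ∀ L : Set X, IsCompact L → L.Countable := by
    intro L hL
    obtain ⟨t, ht⟩ :=
      hL.elim_finite_subcover V (fun x => hVo x) (fun x _ => mem_iUnion.2 ⟨x, hVx x⟩)
    exact (t.countable_toSet.biUnion (fun x _ => (hVc x).mono subset_closure)).mono ht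
  -- closure localization
  have hclV : ∀ (A : Set X) (p : X), p ∈ closure A → p ∈ closure (A ∩ V p) := by
    intro A p hp
    rw [mem_closure_iff] at hp ⊢
    intro o ho hpo
    obtain ⟨y, hy1, hy2⟩ := hp (o ∩ V p) (ho.inter (hVo p)) ⟨hpo, hVx p⟩
    exact ⟨y, hy1.1, hy2, hy1.2⟩
  -- counting countable subsets
  have hctsub : ∀ A : Set X, Cardinal.mk A ≤ Cardinal.aleph 1 →
      Cardinal.mk {S : Set X // S ⊆ A ∧ S.Countable} ≤ Cardinal.aleph 1 := by
    intro A hA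
    have hgdesc : ∀ S : {S : Set X // S ⊆ A ∧ S.Countable}, ∃ gg : ℕ → Option A,
        (S : Set X) = {x | ∃ (n : ℕ) (hx : x ∈ A), gg n = some ⟨x, hx⟩} := by
      rintro ⟨S, hSA, hSc⟩
      rcases S.eq_empty_or_nonempty with rfl | hne
      · refine ⟨fun _ => none, ?_⟩
        ext x
        simp
      · obtain ⟨f, hf⟩ := hSc.exists_eq_range hne
        refine ⟨fun n => if hfn : f n ∈ A then some ⟨f n, hfn⟩ else none, ?_⟩
        ext x
        simp only [mem_setOf_eq]
        constructor
        · intro hx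
          have hxr : x ∈ range f := by rw [← hf]; exact hx
          obtain ⟨n, rfl⟩ := hxr
          exact ⟨n, hSA hx, by rw [dif_pos (hSA hx)]⟩
        · rintro ⟨n, hxA, hgn⟩
          by_cases hfn : f n ∈ A
          · rw [dif_pos hfn] at hgn
            have : f n = x := congrArg Subtype.val (Option.some_injective _ hgn)
            rw [hf, ← this]
            exact mem_range_self n
          · rw [dif_neg hfn] at hgn
            exact absurd hgn (by simp)
    choose gg hgg using hgdesc
    have hinj : Function.Injective gg := by
      intro S T hST
      apply Subtype.ext
      rw [hgg S, hgg T, hST]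
    have h1 : Cardinal.mk {S : Set X // S ⊆ A ∧ S.Countable} ≤ Cardinal.mk (ℕ → Option A) :=
      Cardinal.mk_le_of_injective hinj
    refine h1.trans ?_
    have h2 : Cardinal.mk (ℕ → Option A) = Cardinal.mk (Option A) ^ (Cardinal.aleph0 : Cardinal) := by
      rw [Cardinal.mk_arrow, Cardinal.mk_nat, Cardinal.lift_aleph0, Cardinal.lift_id']
    rw [h2, Cardinal.mk_option]
    have h3 : Cardinal.mk A + 1 ≤ Cardinal.aleph 1 := by
      calc Cardinal.mk A + 1 ≤ Cardinal.aleph 1 + 1 := add_le_add_left hA 1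
        _ = Cardinal.aleph 1 := Cardinal.add_one_eq (Cardinal.aleph0_le_aleph 1)
    calc (Cardinal.mk A + 1) ^ (Cardinal.aleph0 : Cardinal)
        ≤ (Cardinal.aleph 1) ^ (Cardinal.aleph0 : Cardinal) := Cardinal.power_le_power_right h3
      _ = Cardinal.continuum := by rw [← CH_transfer CH, Cardinal.continuum_power_aleph0]
      _ = Cardinal.aleph 1 := CH_transfer CH
  -- counting closures
  have hclcard : ∀ A : Set X, Cardinal.mk A ≤ Cardinal.aleph 1 →
      Cardinal.mk (closure A) ≤ Cardinal.aleph 1 := by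
    intro A hA
    haveI : Nonempty {S : Set X // S ⊆ A ∧ S.Countable} :=
      ⟨⟨∅, empty_subset _, countable_empty⟩⟩
    set fib : {S : Set X // S ⊆ A ∧ S.Countable} → Set X :=
      fun S => {x | x ∈ closure A ∧ A ∩ V x = S.1} with hfibdef
    have hcover : closure A ⊆ ⋃ S, fib S := by
      intro p hp
      exact mem_iUnion.2 ⟨⟨A ∩ V p, inter_subset_left,
        (hVc p).mono (inter_subset_right.trans subset_closure)⟩, hp, rfl⟩
    have hfibct : ∀ S, Cardinal.mk (fib S) ≤ Cardinal.aleph0 := by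
      intro S
      rcases (fib S).eq_empty_or_nonempty with he | ⟨p₀, hp₀⟩
      · rw [he]
        simp
      · have hsub : fib S ⊆ closure (V p₀) := by
          intro p hp
          have h1 : p ∈ closure (A ∩ V p) := hclV A p hp.1
          rw [hp.2] at h1
          have h2 : S.1 ⊆ V p₀ := by rw [← hp₀.2]; exact inter_subset_right
          exact closure_mono h2 h1
        exact Cardinal.le_aleph0_iff_set_countable.2 ((hVc p₀).mono hsub)
    apply Cardinal.lift_le.1
    calc Cardinal.lift (Cardinal.mk (closure A))
        ≤ Cardinal.lift (Cardinal.mk (⋃ S, fib S)) :=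
          Cardinal.lift_le.2 (Cardinal.mk_le_mk_of_subset hcover)
      _ ≤ Cardinal.lift (Cardinal.mk {S : Set X // S ⊆ A ∧ S.Countable}) *
            ⨆ S, Cardinal.lift (Cardinal.mk (fib S)) := Cardinal.mk_iUnion_le_lift fib
      _ ≤ Cardinal.lift (Cardinal.aleph 1) * Cardinal.aleph0 := by
          refine mul_le_mul' (Cardinal.lift_le.2 (hctsub A hA)) (ciSup_le' fun S => ?_)
          calc Cardinal.lift (Cardinal.mk (fib S)) ≤ Cardinal.lift Cardinal.aleph0 :=
                Cardinal.lift_le.2 (hfibct S)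
            _ = Cardinal.aleph0 := Cardinal.lift_aleph0
      _ = Cardinal.lift (Cardinal.aleph 1) := by
          rw [Cardinal.lift_aleph, Ordinal.lift_one,
            Cardinal.mul_eq_max (Cardinal.aleph0_le_aleph 1) le_rfl,
            max_eq_left (Cardinal.aleph0_le_aleph 1)]
  -- the moving-off selector
  have hgex : ∀ L : Set X, ∃ K : Set X, IsCompact L → K ∈ 𝒦 ∧ Disjoint K L := by
    intro L
    by_cases hL : IsCompact L
    · obtain ⟨K, hK1, hK2⟩ := hmov L hL
      exact ⟨K, fun _ => ⟨hK1, hK2⟩⟩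
    · exact ⟨∅, fun hc => absurd hc hL⟩
  choose g hg using hgex
  -- the one-step closure operator
  set Φ : Set X → Set X := fun S =>
    (closure S ∪ ⋃ y ∈ S, V y) ∪ ⋃ L ∈ {L : Set X | L ⊆ S ∧ IsCompact L}, g L with hΦdef
  have hΦsub : ∀ S : Set X, S ⊆ Φ S := fun S =>
    subset_closure.trans (subset_union_left.trans subset_union_left)
  have hΦcard : ∀ S : Set X, Cardinal.mk S ≤ Cardinal.aleph 1 →
      Cardinal.mk (Φ S) ≤ Cardinal.aleph 1 := by
    intro S hS
    have hB : Cardinal.mk (⋃ y ∈ S, V y) ≤ Cardinal.aleph 1 := by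
      refine (Cardinal.mk_biUnion_le V S).trans ?_
      calc Cardinal.mk S * ⨆ x : S, Cardinal.mk (V x.1)
          ≤ Cardinal.aleph 1 * Cardinal.aleph0 := by
            refine mul_le_mul' hS (ciSup_le' fun x => ?_)
            exact Cardinal.le_aleph0_iff_set_countable.2 ((hVc x.1).mono subset_closure)
        _ = Cardinal.aleph 1 := by
            rw [Cardinal.mul_eq_max (Cardinal.aleph0_le_aleph 1) le_rfl,
              max_eq_left (Cardinal.aleph0_le_aleph 1)]
    have hC : Cardinal.mk (⋃ L ∈ {L : Set X | L ⊆ S ∧ IsCompact L}, g L) ≤ Cardinal.aleph 1 := by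
      apply Cardinal.lift_le.1
      calc Cardinal.lift (Cardinal.mk (⋃ L ∈ {L : Set X | L ⊆ S ∧ IsCompact L}, g L))
          ≤ Cardinal.lift (Cardinal.mk {L : Set X | L ⊆ S ∧ IsCompact L}) *
              ⨆ L : {L : Set X | L ⊆ S ∧ IsCompact L}, Cardinal.lift (Cardinal.mk (g L.1)) :=
            Cardinal.mk_biUnion_le_lift g {L : Set X | L ⊆ S ∧ IsCompact L}
        _ ≤ Cardinal.lift (Cardinal.aleph 1) * Cardinal.aleph0 := by
            refine mul_le_mul' (Cardinal.lift_le.2 ?_) (ciSup_le' fun L => ?_)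
            · have hss : {L : Set X | L ⊆ S ∧ IsCompact L} ⊆ {L : Set X | L ⊆ S ∧ L.Countable} :=
                fun L hL => ⟨hL.1, hcptct L hL.2⟩
              exact (Cardinal.mk_le_mk_of_subset hss).trans (hctsub S hS)
            · have hgc : (g L.1).Countable := hcptct _ (hcpt _ (hg L.1 L.2.2).1)
              calc Cardinal.lift (Cardinal.mk (g L.1)) ≤ Cardinal.lift Cardinal.aleph0 :=
                    Cardinal.lift_le.2 (Cardinal.le_aleph0_iff_set_countable.2 hgc)
                _ = Cardinal.aleph0 := Cardinal.lift_aleph0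
        _ = Cardinal.lift (Cardinal.aleph 1) := by
            rw [Cardinal.lift_aleph, Ordinal.lift_one,
              Cardinal.mul_eq_max (Cardinal.aleph0_le_aleph 1) le_rfl,
              max_eq_left (Cardinal.aleph0_le_aleph 1)]
    calc Cardinal.mk (Φ S)
        ≤ Cardinal.mk ((closure S ∪ ⋃ y ∈ S, V y : Set X)) +
            Cardinal.mk (⋃ L ∈ {L : Set X | L ⊆ S ∧ IsCompact L}, g L) := Cardinal.mk_union_le _ _
      _ ≤ (Cardinal.mk (closure S) + Cardinal.mk (⋃ y ∈ S, V y)) +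
            Cardinal.mk (⋃ L ∈ {L : Set X | L ⊆ S ∧ IsCompact L}, g L) :=
          add_le_add_left (Cardinal.mk_union_le _ _) _
      _ ≤ (Cardinal.aleph 1 + Cardinal.aleph 1) + Cardinal.aleph 1 :=
          add_le_add (add_le_add (hclcard S hS) hB) hC
      _ = Cardinal.aleph 1 := by
          rw [Cardinal.add_eq_self (Cardinal.aleph0_le_aleph 1),
            Cardinal.add_eq_self (Cardinal.aleph0_le_aleph 1)]
  set ω₁ : Ordinal.{0} := (Cardinal.aleph 1).ord with hω₁
  have hωlim : Order.IsSuccLimit ω₁ := Cardinal.isSuccLimit_ord (Cardinal.aleph0_le_aleph 1)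
  have hmono : ∀ {o₁ o₂ : Ordinal.{0}}, o₁ ≤ o₂ → ordIter Φ o₁ ⊆ ordIter Φ o₂ := by
    intro o₁ o₂ hle
    rcases eq_or_lt_of_le hle with rfl | hlt
    · exact subset_rfl
    · rw [ordIter_def Φ o₂]
      have hsub : ordIter Φ o₁ ⊆ ⋃ o' < o₂, ordIter Φ o' := fun x hx =>
        mem_iUnion₂.2 ⟨o₁, hlt, hx⟩
      exact hsub.trans (hΦsub _)
  have hstage : ∀ o : Ordinal.{0}, o < ω₁ → Cardinal.mk (ordIter Φ o) ≤ Cardinal.aleph 1 := by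
    intro o
    induction o using Ordinal.induction with
    | _ o IH =>
      intro ho
      rw [ordIter_def]
      apply hΦcard
      apply Cardinal.mk_iUnion_Ordinal_lift_le_of_le ?_ (Cardinal.aleph0_le_aleph 1) _
        (fun j hj => IH j hj (hj.trans ho))
      have h1 : o.card ≤ Cardinal.aleph 1 := (Cardinal.lt_ord.1 ho).le
      calc Cardinal.lift o.card ≤ Cardinal.lift (Cardinal.aleph 1) := Cardinal.lift_le.2 h1
        _ = Cardinal.aleph 1 := by rw [Cardinal.lift_aleph, Ordinal.lift_one]
        _ = Cardinal.lift.{0} (Cardinal.aleph 1) := by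
              rw [Cardinal.lift_aleph, Ordinal.lift_one]
  set Y : Set X := ⋃ o < ω₁, ordIter Φ o with hYdef
  have hstageY : ∀ o : Ordinal.{0}, o < ω₁ → ordIter Φ o ⊆ Y := by
    intro o ho x hx
    exact mem_iUnion₂.2 ⟨o, ho, hx⟩
  have hYcard : Cardinal.mk Y ≤ Cardinal.aleph 1 := by
    apply Cardinal.mk_iUnion_Ordinal_lift_le_of_le ?_ (Cardinal.aleph0_le_aleph 1) _ hstage
    rw [hω₁, Cardinal.card_ord, Cardinal.lift_aleph, Ordinal.lift_one,
      Cardinal.lift_aleph, Ordinal.lift_one]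
  have hsmall : ∀ T : Set X, T.Countable → T ⊆ Y → ∃ o, o < ω₁ ∧ T ⊆ ordIter Φ o := by
    intro T hTc hTY
    rcases T.eq_empty_or_nonempty with rfl | hTne
    · exact ⟨0, hωlim.pos, empty_subset _⟩
    obtain ⟨f, hf⟩ := hTc.exists_eq_range hTne
    have hstg : ∀ n : ℕ, ∃ o, o < ω₁ ∧ f n ∈ ordIter Φ o := by
      intro n
      have hfn : f n ∈ Y := hTY (by rw [hf]; exact mem_range_self n)
      obtain ⟨o, ho, hmem⟩ := mem_iUnion₂.1 hfn
      exact ⟨o, ho, hmem⟩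
    choose u hu1 hu2 using hstg
    have hsup : (⨆ n, u n) < ω₁ := by
      apply Ordinal.iSup_lt_ord ?_ hu1
      rw [Cardinal.mk_nat, Cardinal.isRegular_aleph_one.cof_eq]
      exact Cardinal.aleph0_lt_aleph_one
    refine ⟨_, hsup, ?_⟩
    rw [hf]
    rintro x ⟨n, rfl⟩
    exact hmono (Ordinal.le_iSup u n) (hu2 n)
  have hYclosed : IsClosed Y := by
    refine isClosed_of_closure_subset ?_
    intro p hp
    have h1 : p ∈ closure (Y ∩ V p) := hclV Y p hp
    obtain ⟨o, ho, hsub⟩ := hsmall (Y ∩ V p)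
      ((hVc p).mono (inter_subset_right.trans subset_closure)) inter_subset_left
    have h3 : p ∈ closure (ordIter Φ o) := closure_mono hsub h1
    have h4 : p ∈ ordIter Φ (Order.succ o) := by
      rw [ordIter_def]
      apply mem_union_left
      apply mem_union_left
      refine closure_mono ?_ h3
      intro x hx
      exact mem_iUnion₂.2 ⟨o, Order.lt_succ o, hx⟩
    exact hstageY _ (hωlim.succ_lt ho) h4
  have hYopen : IsOpen Y := by
    rw [isOpen_iff_forall_mem_open]
    intro x hx
    obtain ⟨o, ho, hxo⟩ := mem_iUnion₂.1 hx
    have hVsub : V x ⊆ ordIter Φ (Order.succ o) := by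
      rw [ordIter_def]
      intro y hy
      apply mem_union_left
      apply mem_union_right
      exact mem_biUnion (mem_iUnion₂.2 ⟨o, Order.lt_succ o, hxo⟩) hy
    exact ⟨V x, hVsub.trans (hstageY _ (hωlim.succ_lt ho)), hVo x, hVx x⟩
  have hYmov : ∀ L : Set X, IsCompact L → L ⊆ Y → ∃ K, K ∈ 𝒦 ∧ K ⊆ Y ∧ Disjoint K L := by
    intro L hL hLY
    obtain ⟨o, ho, hsub⟩ := hsmall L (hcptct L hL) hLY
    have hKsub : g L ⊆ ordIter Φ (Order.succ o) := by
      rw [ordIter_def]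
      intro y hy
      apply mem_union_right
      refine mem_biUnion ?_ hy
      exact ⟨hsub.trans (fun x hx => mem_iUnion₂.2 ⟨o, Order.lt_succ o, hx⟩), hL⟩
    obtain ⟨hg1, hg2⟩ := hg L hL
    exact ⟨g L, hg1, hKsub.trans (hstageY _ (hωlim.succ_lt ho)), hg2⟩
  -- now transfer the MOP from the clopen subspace `Y`
  have hMOPY := h Y hYclosed hYcard
  set 𝒦' : Set (Set ↥Y) := {S | ∃ K, K ∈ 𝒦 ∧ K ⊆ Y ∧ S = Subtype.val ⁻¹' K} with h𝒦'
  have hmo' : IsMovingOff 𝒦' := by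
    refine ⟨?_, ?_, ?_⟩
    · rintro S ⟨K, hK, hKY, rfl⟩
      obtain ⟨x, hx⟩ := hne K hK
      exact ⟨⟨x, hKY hx⟩, hx⟩
    · rintro S ⟨K, hK, hKY, rfl⟩
      rw [Subtype.isCompact_iff, Subtype.image_preimage_coe,
        inter_eq_self_of_subset_right hKY]
      exact hcpt K hK
    · intro L' hL'
      have hLc : IsCompact (Subtype.val '' L') := hL'.image continuous_subtype_val
      have hLY : Subtype.val '' L' ⊆ Y := by
        rintro x ⟨x', _, rfl⟩
        exact x'.2
      obtain ⟨K, hK, hKY, hdisj⟩ := hYmov _ hLc hLY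
      refine ⟨Subtype.val ⁻¹' K, ⟨K, hK, hKY, rfl⟩, ?_⟩
      rw [disjoint_left]
      intro a ha ha'
      exact disjoint_left.1 hdisj ha (mem_image_of_mem _ ha')
  obtain ⟨K', hK'mem, hK'inj, U', hU'o, hK'U, hU'disc⟩ := hMOPY 𝒦' hmo'
  have hKdata : ∀ n, ∃ K, K ∈ 𝒦 ∧ K ⊆ Y ∧ K' n = Subtype.val ⁻¹' K := fun n => hK'mem n
  choose KK hKK1 hKK2 hKK3 using hKdata
  have hWdata : ∀ n, ∃ W : Set X, IsOpen W ∧ Subtype.val ⁻¹' W = U' n := fun n =>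
    isOpen_induced_iff.1 (hU'o n)
  choose W hW1 hW2 using hWdata
  refine ⟨KK, hKK1, ?_, fun n => W n ∩ Y, fun n => (hW1 n).inter hYopen, ?_, ?_⟩
  · intro n m hnm
    apply hK'inj
    rw [hKK3 n, hKK3 m, hnm]
  · intro n x hx
    have hxY : x ∈ Y := hKK2 n hx
    have hxK' : (⟨x, hxY⟩ : ↥Y) ∈ K' n := by
      rw [hKK3 n]
      exact hx
    have hU := hK'U n hxK'
    rw [← hW2 n] at hU
    exact ⟨hU, hxY⟩
  · intro x
    by_cases hxY : x ∈ Y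
    · obtain ⟨V', hV'n, hV'sub⟩ := hU'disc ⟨x, hxY⟩
      obtain ⟨t, ht, htsub⟩ := (mem_nhds_subtype Y ⟨x, hxY⟩ V').1 hV'n
      refine ⟨t ∩ Y, Filter.inter_mem ht (hYopen.mem_nhds hxY), ?_⟩
      have hmapmem : ∀ i : ℕ, ((W i ∩ Y) ∩ (t ∩ Y)).Nonempty → (U' i ∩ V').Nonempty := by
        rintro i ⟨y, ⟨hyW, hyY⟩, hyt, -⟩
        refine ⟨⟨y, hyY⟩, ?_, htsub hyt⟩
        rw [← hW2 i]
        exact hyW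
      intro i hi j hj
      exact hV'sub (hmapmem i hi) (hmapmem j hj)
    · refine ⟨Yᶜ, hYclosed.isOpen_compl.mem_nhds hxY, ?_⟩
      rintro i ⟨y, ⟨-, hyY⟩, hyc⟩
      exact absurd hyY hyc
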